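/- Let i₁, i₃ be positive integers with i₃ > i₁ ≥ 1. Then the triple integral ∫₀¹ ∫₀¹ ∫₀¹ 1/(x₁^{i₁}·x₂^{i₃}·x₃^{i₃} + q) dx₃ dx₂ dx₁ satisfies ∫₀¹ ∫₀¹ ∫₀¹ 1/(x₁^{i₁}·x₂^{i₃}·x₃^{i₃} + q) dx₃ dx₂ dx₁ = Θ(q^(−1 + 1/i₃)·(−log q)) as q → 0⁺. -/

import Mathlib

open MeasureTheory Filter Topology intervalIntegral

/-- `I = Θ(R)` as `q → 0⁺`: there exist constants `0 < c ≤ C` and `q₀ > 0` such that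
`c·R q ≤ I q ≤ C·R q` for all `0 < q < q₀`. -/
def IsThetaAtZero (I R : ℝ → ℝ) : Prop :=
  ∃ c C q₀ : ℝ, 0 < c ∧ c ≤ C ∧ 0 < q₀ ∧
    ∀ q : ℝ, 0 < q → q < q₀ → c * R q ≤ I q ∧ I q ≤ C * R q

namespace ThetaAux

variable {b : ℕ} {q : ℝ}

lemma denom_pos (hq : 0 < q) {s x : ℝ} (hs : 0 ≤ s) :
    0 < s * |x| ^ b + q := by
  have h : (0:ℝ) ≤ s * |x| ^ b := by positivity
  linarith

lemma cont_integrand (hq : 0 < q) {s : ℝ} (hs : 0 ≤ s) :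
    Continuous fun x : ℝ => 1 / (s * |x| ^ b + q) :=
  continuous_const.div (by continuity) fun x => (denom_pos hq hs).ne'

lemma integrand_le (hq : 0 < q) {s : ℝ} (hs : 0 ≤ s) (x : ℝ) :
    1 / (s * |x| ^ b + q) ≤ 1 / q :=
  one_div_le_one_div_of_le hq (le_add_of_nonneg_left (by positivity))

lemma integrand_nonneg (hq : 0 < q) {s : ℝ} (hs : 0 ≤ s) (x : ℝ) :
    0 ≤ 1 / (s * |x| ^ b + q) :=
  le_of_lt (by positivity)

lemma integral_le_const (hq : 0 < q) {s u v : ℝ} (hs : 0 ≤ s) (huv : u ≤ v) :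
    ∫ x in u..v, 1 / (s * |x| ^ b + q) ≤ (v - u) / q := by
  have h := intervalIntegral.integral_mono_on (μ := volume) huv
    ((cont_integrand (b := b) hq hs).intervalIntegrable u v)
    (_root_.intervalIntegrable_const) (fun x _ => integrand_le (b := b) hq hs x)
  simpa [smul_eq_mul, mul_one_div, div_eq_mul_inv] using h

lemma m_pow (hb : 2 ≤ b) (hq0 : 0 < q) {s : ℝ} (hs : 0 < s) :
    ((q/s) ^ (1/(b:ℝ))) ^ ((b:ℝ)) = q/s := by
  have hβ : (b:ℝ) ≠ 0 := by
    have : (0:ℕ) < b := by omega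
    exact_mod_cast this.ne'
  rw [← Real.rpow_mul (div_nonneg hq0.le hs.le), one_div_mul_cancel hβ, Real.rpow_one]

lemma beta_facts (hb : 2 ≤ b) : (2:ℝ) ≤ (b:ℝ) ∧ (0:ℝ) < (b:ℝ) ∧ ((b:ℝ)) ≠ 0 := by
  have h2 : (2:ℝ) ≤ (b:ℝ) := by exact_mod_cast hb
  exact ⟨h2, by linarith, by positivity⟩

lemma m_one_sub (hb : 2 ≤ b) (hq0 : 0 < q) {s : ℝ} (hs : 0 < s) :
    ((q/s) ^ (1/(b:ℝ))) ^ (1 - (b:ℝ)) = (q/s) ^ (1/(b:ℝ)) * (s/q) := by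
  set m := (q/s) ^ (1/(b:ℝ)) with hm
  have hm0 : 0 < m := Real.rpow_pos_of_pos (div_pos hq0 hs) _
  have h1 : m ^ ((1:ℝ) - (b:ℝ)) = m ^ (1:ℝ) * m ^ (-(b:ℝ)) := by
    rw [← Real.rpow_add hm0]; ring_nf
  rw [h1, Real.rpow_one, Real.rpow_neg hm0.le, m_pow hb hq0 hs, inv_div]

/-- rpow-integral bound pieces: `∫ x in m..1, x ^ (-(b:ℝ)) = (m^(1-b) - 1)/(b-1)`. -/
lemma integral_rpow_neg (hb : 2 ≤ b) {m : ℝ} (hm0 : 0 < m) :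
    ∫ x in m..(1:ℝ), x ^ (-(b:ℝ)) = (m ^ ((1:ℝ)-(b:ℝ)) - 1) / ((b:ℝ) - 1) := by
  obtain ⟨h2, hβ0, hβ⟩ := beta_facts hb
  have h0 : (0:ℝ) ∉ Set.uIcc m 1 := by
    rw [Set.mem_uIcc]; push_neg
    constructor <;> intro h <;> [linarith; linarith]
  rw [integral_rpow (Or.inr ⟨by intro h; rw [neg_eq_iff_eq_neg] at h; norm_num at h; linarith, h0⟩)]
  rw [Real.one_rpow]
  rw [show -(b:ℝ) + 1 = (1:ℝ) - (b:ℝ) by ring]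
  rw [div_eq_div_iff (by linarith) (by linarith)]
  ring

lemma inner_upper (hb : 2 ≤ b) (hq : 0 < q) {s : ℝ} (hs : 0 < s) :
    ∫ x in (0:ℝ)..1, 1 / (s * |x| ^ b + q) ≤ 2 * ((q/s) ^ (1/(b:ℝ)) / q) := by
  obtain ⟨h2, hβ0, hβ⟩ := beta_facts hb
  set m := (q/s) ^ (1/(b:ℝ)) with hmdef
  have hm0 : 0 < m := Real.rpow_pos_of_pos (div_pos hq hs) _
  have hmq : 0 ≤ m / q := div_nonneg hm0.le hq.le
  rcases le_or_gt q s with hqs | hqs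
  · have hm1 : m ≤ 1 :=
      Real.rpow_le_one (div_nonneg hq.le hs.le) (div_le_one_of_le₀ hqs hs.le) (by positivity)
    have hIa : IntervalIntegrable (fun x => 1/(s*|x|^b + q)) volume 0 m :=
      (cont_integrand hq hs.le).intervalIntegrable _ _
    have hIb : IntervalIntegrable (fun x => 1/(s*|x|^b + q)) volume m 1 :=
      (cont_integrand hq hs.le).intervalIntegrable _ _
    rw [← intervalIntegral.integral_add_adjacent_intervals hIa hIb]
    have h1 : ∫ x in (0:ℝ)..m, 1/(s*|x|^b + q) ≤ m / q := by
      simpa using integral_le_const (b := b) hq hs.le hm0.le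
    have hkey : ∀ x ∈ Set.Icc m 1, 1/(s*|x|^b+q) ≤ s⁻¹ * x ^ (-(b:ℝ)) := by
      intro x hx
      have hx0 : 0 < x := lt_of_lt_of_le hm0 hx.1
      have hxb : x ^ (-(b:ℝ)) = (x ^ b)⁻¹ := by
        rw [Real.rpow_neg hx0.le, Real.rpow_natCast]
      rw [hxb, abs_of_nonneg hx0.le]
      have hd : 0 < s * x ^ b := by positivity
      calc 1/(s*x^b+q) ≤ 1/(s*x^b) := one_div_le_one_div_of_le hd (by linarith)
        _ = s⁻¹ * (x^b)⁻¹ := by rw [one_div, mul_inv]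
    have h2' : ∫ x in m..(1:ℝ), 1/(s*|x|^b+q)
        ≤ s⁻¹ * ((m ^ ((1:ℝ)-(b:ℝ)) - 1) / ((b:ℝ)-1)) := by
      have hInt2 : IntervalIntegrable (fun x => s⁻¹ * x ^ (-(b:ℝ))) volume m 1 := by
        apply IntervalIntegrable.const_mul
        apply intervalIntegrable_rpow (Or.inr ?_)
        rw [Set.mem_uIcc]; push_neg; constructor <;> intro h <;> linarith
      have h := intervalIntegral.integral_mono_on hm1 hIb hInt2 hkey
      rwa [intervalIntegral.integral_const_mul, integral_rpow_neg hb hm0] at h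
    have hfin : s⁻¹ * ((m ^ ((1:ℝ)-(b:ℝ)) - 1) / ((b:ℝ)-1)) ≤ m / q := by
      rw [m_one_sub hb hq hs]
      have h0 : (0:ℝ) ≤ m * (s/q) := by positivity
      calc s⁻¹ * ((m * (s/q) - 1)/((b:ℝ)-1))
          ≤ s⁻¹ * ((m * (s/q))/((b:ℝ)-1)) := by gcongr <;> linarith
        _ ≤ s⁻¹ * ((m * (s/q))/1) := by gcongr <;> linarith
        _ = m / q := by field_simp
    linarith
  · have h1 : ∫ x in (0:ℝ)..1, 1/(s*|x|^b + q) ≤ 1/q := by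
      simpa using integral_le_const (b := b) hq hs.le zero_le_one
    have hm1 : 1 ≤ m := Real.one_le_rpow (by rw [le_div_iff₀ hs]; linarith) (by positivity)
    have : 1/q ≤ m/q := by gcongr
    linarith

lemma inner_lower (hb : 2 ≤ b) (hq : 0 < q) {s : ℝ} (hs4 : 4*q ≤ s) :
    (q/s) ^ (1/(b:ℝ)) / (4 * ((b:ℝ)-1) * q) ≤ ∫ x in (0:ℝ)..1, 1 / (s * |x| ^ b + q) := by
  obtain ⟨h2, hβ0, hβ⟩ := beta_facts hb
  have hs : 0 < s := by linarith
  have hβ1 : (0:ℝ) < (b:ℝ) - 1 := by linarith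
  set m := (q/s) ^ (1/(b:ℝ)) with hmdef
  have hm0 : 0 < m := Real.rpow_pos_of_pos (div_pos hq hs) _
  have hqs4 : q/s ≤ 1/4 := by rw [div_le_div_iff₀ hs (by norm_num)]; linarith
  have hm1 : m ≤ 1 := Real.rpow_le_one (by positivity) (by linarith) (by positivity)
  have hm2 : 2*(q/s) ≤ m := by
    have hu : (0:ℝ) ≤ q/s := by positivity
    have h12 : 1/(b:ℝ) ≤ 1/2 := by
      rw [div_le_div_iff₀ hβ0 (by norm_num)]; linarith
    have hs2 : (q/s) ^ ((1:ℝ)/2) ≤ m :=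
      Real.rpow_le_rpow_of_exponent_ge (by positivity) (by linarith) h12
    have h14 : Real.sqrt (1/4 : ℝ) = 1/2 := by
      rw [show (1/4:ℝ) = (1/2)^2 by norm_num]
      exact Real.sqrt_sq (by norm_num)
    have hsq : Real.sqrt (q/s) ≤ 1/2 := by
      rw [← h14]; exact Real.sqrt_le_sqrt hqs4
    have h2u : 2*(q/s) ≤ (q/s) ^ ((1:ℝ)/2) := by
      rw [← Real.sqrt_eq_rpow]
      nlinarith [Real.sq_sqrt hu, Real.sqrt_nonneg (q/s)]
    linarith
  have hIa := (cont_integrand (b := b) hq hs.le).intervalIntegrable (μ := volume) 0 m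
  have hIb := (cont_integrand (b := b) hq hs.le).intervalIntegrable (μ := volume) m 1
  rw [← intervalIntegral.integral_add_adjacent_intervals hIa hIb]
  have h1 : 0 ≤ ∫ x in (0:ℝ)..m, 1/(s*|x|^b + q) :=
    intervalIntegral.integral_nonneg hm0.le (fun x _ => integrand_nonneg hq hs.le x)
  have hkey : ∀ x ∈ Set.Icc m 1, (2*s)⁻¹ * x ^ (-(b:ℝ)) ≤ 1/(s*|x|^b+q) := by
    intro x hx
    have hx0 : 0 < x := lt_of_lt_of_le hm0 hx.1
    have hxb : x ^ (-(b:ℝ)) = (x ^ b)⁻¹ := by rw [Real.rpow_neg hx0.le, Real.rpow_natCast]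
    have hqle : q ≤ s * x ^ b := by
      have hpow : m ^ b ≤ x ^ b := pow_le_pow_left₀ hm0.le hx.1 b
      have hmb : m ^ b = q/s := by rw [← Real.rpow_natCast m b, m_pow hb hq hs]
      rw [hmb] at hpow
      calc q = s * (q/s) := by field_simp
        _ ≤ s * x^b := by gcongr
    rw [hxb, abs_of_nonneg hx0.le]
    have hd : 0 < s * x ^ b + q := by positivity
    have hcmp : 1/(2*(s*x^b)) ≤ 1/(s*x^b+q) := one_div_le_one_div_of_le hd (by linarith)
    calc (2*s)⁻¹ * (x^b)⁻¹ = 1/(2*(s*x^b)) := by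
          rw [one_div, ← mul_inv, mul_assoc]
      _ ≤ 1/(s*x^b+q) := hcmp
  have hInt2 : IntervalIntegrable (fun x => (2*s)⁻¹ * x ^ (-(b:ℝ))) volume m 1 := by
    apply IntervalIntegrable.const_mul
    apply intervalIntegrable_rpow (Or.inr ?_)
    rw [Set.mem_uIcc]; push_neg; constructor <;> intro h <;> linarith
  have h := intervalIntegral.integral_mono_on hm1 hInt2 hIb hkey
  rw [intervalIntegral.integral_const_mul, integral_rpow_neg hb hm0] at h
  have hm1b : m ^ ((1:ℝ)-(b:ℝ)) = m * (s/q) := m_one_sub hb hq hs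
  have hge2 : (2:ℝ) ≤ m * (s/q) := by
    have hmul := mul_le_mul_of_nonneg_right hm2 (le_of_lt (div_pos hs hq))
    have heq : 2*(q/s)*(s/q) = 2 := by field_simp
    linarith [heq ▸ hmul]
  have hfinal : m / (4*((b:ℝ)-1)*q) ≤ (2*s)⁻¹ * ((m ^ ((1:ℝ)-(b:ℝ)) - 1)/((b:ℝ)-1)) := by
    rw [hm1b]
    have hh : m*(s/q)/2 ≤ m*(s/q) - 1 := by linarith
    calc m/(4*((b:ℝ)-1)*q) = (2*s)⁻¹ * ((m*(s/q)/2)/((b:ℝ)-1)) := by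
          field_simp; ring
      _ ≤ (2*s)⁻¹ * ((m*(s/q)-1)/((b:ℝ)-1)) := by gcongr
  linarith

lemma cont_param (hq : 0 < q) {c : ℝ → ℝ} (hc : Continuous c) (hc0 : ∀ x, 0 ≤ c x) :
    Continuous fun x : ℝ => ∫ y in (0:ℝ)..1, 1 / (c x * |y| ^ b + q) := by
  apply intervalIntegral.continuous_parametric_intervalIntegral_of_continuous'
    (f := fun x y => 1 / (c x * |y| ^ b + q)) ?_ 0 1
  have heq : (Function.uncurry fun (x y : ℝ) => 1 / (c x * |y| ^ b + q))
      = fun p : ℝ × ℝ => 1 / (c p.1 * |p.2| ^ b + q) := rfl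
  rw [heq]
  refine continuous_const.div (by continuity) fun p => ?_
  have h : (0:ℝ) ≤ c p.1 * |p.2| ^ b := mul_nonneg (hc0 _) (by positivity)
  exact (by linarith : (0:ℝ) < c p.1 * |p.2| ^ b + q).ne'

lemma cont_param2 (hq : 0 < q) (a : ℕ) :
    Continuous fun p : ℝ × ℝ => ∫ y in (0:ℝ)..1, 1 / (|p.1| ^ a * |p.2| ^ b * |y| ^ b + q) := by
  apply intervalIntegral.continuous_parametric_intervalIntegral_of_continuous'
    (f := fun (p : ℝ × ℝ) (y : ℝ) => 1 / (|p.1| ^ a * |p.2| ^ b * |y| ^ b + q)) ?_ 0 1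
  have heq : (Function.uncurry fun (p : ℝ × ℝ) (y : ℝ) => 1 / (|p.1| ^ a * |p.2| ^ b * |y| ^ b + q))
      = fun r : (ℝ × ℝ) × ℝ => 1 / (|r.1.1| ^ a * |r.1.2| ^ b * |r.2| ^ b + q) := rfl
  rw [heq]
  have hc : Continuous fun r : (ℝ × ℝ) × ℝ => |r.1.1| ^ a * |r.1.2| ^ b * |r.2| ^ b + q :=
    ((((continuous_fst.comp continuous_fst).abs.pow a).mul
      ((continuous_snd.comp continuous_fst).abs.pow b)).mul
      (continuous_snd.abs.pow b)).add continuous_const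
  refine continuous_const.div hc fun r => ?_
  have h : (0:ℝ) ≤ |r.1.1| ^ a * |r.1.2| ^ b * |r.2| ^ b := by positivity
  exact (by linarith : (0:ℝ) < |r.1.1| ^ a * |r.1.2| ^ b * |r.2| ^ b + q).ne'

lemma cont_Phi (hq : 0 < q) (a : ℕ) :
    Continuous fun x₁ : ℝ =>
      ∫ x₂ in (0:ℝ)..1, ∫ x₃ in (0:ℝ)..1, 1 / (|x₁| ^ a * |x₂| ^ b * |x₃| ^ b + q) := by
  apply intervalIntegral.continuous_parametric_intervalIntegral_of_continuous'
    (f := fun (x₁ x₂ : ℝ) => ∫ x₃ in (0:ℝ)..1, 1 / (|x₁| ^ a * |x₂| ^ b * |x₃| ^ b + q)) ?_ 0 1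
  exact cont_param2 hq a

lemma mid_upper (hb : 2 ≤ b) (hq : 0 < q) (hq16 : q ≤ 1/16) {t : ℝ} (ht0 : 0 < t) (ht1 : t ≤ 1) :
    ∫ x₂ in (0:ℝ)..1, ∫ x₃ in (0:ℝ)..1, 1/(t * |x₂|^b * |x₃|^b + q)
      ≤ 3 * ((q/t) ^ (1/(b:ℝ)) / q) * (-Real.log q) := by
  obtain ⟨h2, hβ0, hβ⟩ := beta_facts hb
  have hL1 : 1 ≤ -Real.log q := by
    have hlog : Real.log q ≤ Real.log (1/16) := Real.log_le_log hq hq16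
    have h16 : (1:ℝ) ≤ Real.log 16 := by
      rw [Real.le_log_iff_exp_le (by norm_num : (0:ℝ) < 16)]
      have := Real.exp_one_lt_d9
      linarith
    rw [one_div, Real.log_inv] at hlog
    linarith
  set L := -Real.log q with hLdef
  set ψ := fun x₂ : ℝ => ∫ x₃ in (0:ℝ)..1, 1/(t * |x₂|^b * |x₃|^b + q) with hψdef
  have hψcont : Continuous ψ :=
    cont_param hq (c := fun x₂ => t * |x₂|^b) (continuous_const.mul (continuous_abs.pow b))
      (fun x => by positivity)
  have hψle : ∀ x₂ : ℝ, ψ x₂ ≤ 1/q := fun x₂ => by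
    have h := integral_le_const (b := b) hq (s := t*|x₂|^b) (by positivity) zero_le_one
    rw [show (1:ℝ)-0 = 1 by ring] at h
    exact h
  set m := (q/t) ^ (1/(b:ℝ)) with hmdef
  have hm0 : 0 < m := Real.rpow_pos_of_pos (div_pos hq ht0) _
  have hmq : 0 ≤ m / q := div_nonneg hm0.le hq.le
  rcases le_or_gt t q with htq | htq
  · have hm1 : 1 ≤ m := Real.one_le_rpow ((le_div_iff₀ ht0).2 (by linarith)) (by positivity)
    have hint : ∫ x₂ in (0:ℝ)..1, ψ x₂ ≤ 1/q := by
      have h := intervalIntegral.integral_mono_on zero_le_one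
        (hψcont.intervalIntegrable (μ := volume) 0 1) _root_.intervalIntegrable_const (fun x _ => hψle x)
      simpa using h
    have e0 : 1/q ≤ m/q := by gcongr
    have e2 : m/q * 1 ≤ m/q * L := mul_le_mul_of_nonneg_left hL1 hmq
    have e3 : 0 ≤ m/q*L := mul_nonneg hmq (by linarith)
    have : ∫ x₂ in (0:ℝ)..1, ψ x₂ ≤ 3*(m/q)*L := by nlinarith
    calc ∫ x₂ in (0:ℝ)..1, ψ x₂ ≤ 3*(m/q)*L := this
      _ = 3 * (m/q) * L := by ring
  · have hm1 : m ≤ 1 :=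
      le_of_lt (Real.rpow_lt_one (by positivity) ((div_lt_one ht0).2 htq) (by positivity))
    have hIa := hψcont.intervalIntegrable (μ := volume) 0 m
    have hIb := hψcont.intervalIntegrable (μ := volume) m 1
    rw [← intervalIntegral.integral_add_adjacent_intervals hIa hIb]
    have h1 : ∫ x₂ in (0:ℝ)..m, ψ x₂ ≤ m/q := by
      have h := intervalIntegral.integral_mono_on hm0.le hIa
        _root_.intervalIntegrable_const (fun x _ => hψle x)
      simpa [div_eq_mul_inv] using h
    have hkey : ∀ x₂ ∈ Set.Icc m 1, ψ x₂ ≤ (2*(m/q)) * x₂⁻¹ := by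
      intro x₂ hx
      have hx0 : 0 < x₂ := lt_of_lt_of_le hm0 hx.1
      have hs : 0 < t * |x₂|^b := by positivity
      have h := inner_upper hb hq hs
      have hid : (q/(t * |x₂|^b)) ^ (1/(b:ℝ)) = m * x₂⁻¹ := by
        rw [abs_of_nonneg hx0.le, div_mul_eq_div_mul_one_div, one_div,
          Real.mul_rpow (div_nonneg hq.le ht0.le) (inv_nonneg.2 (by positivity)),
          ← Real.rpow_natCast x₂ b, ← Real.rpow_neg hx0.le, ← Real.rpow_mul hx0.le,
          show -(b:ℝ)*(1/(b:ℝ)) = -1 by field_simp, Real.rpow_neg_one]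
      rw [hid] at h
      calc ψ x₂ ≤ 2 * (m * x₂⁻¹ / q) := h
        _ = (2*(m/q)) * x₂⁻¹ := by ring
    have hInt2 : IntervalIntegrable (fun x => (2*(m/q)) * x⁻¹) volume m 1 := by
      apply IntervalIntegrable.const_mul
      refine intervalIntegrable_inv (fun x hx => ?_) continuousOn_id
      rw [Set.uIcc_of_le hm1] at hx
      exact (lt_of_lt_of_le hm0 hx.1).ne'
    have h0notmem : (0:ℝ) ∉ Set.uIcc m 1 := by
      rw [Set.uIcc_of_le hm1]
      intro hmem
      exact absurd hmem.1 (not_le.2 hm0)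
    have h2' : ∫ x₂ in m..(1:ℝ), ψ x₂ ≤ (2*(m/q)) * (-Real.log m) := by
      have h := intervalIntegral.integral_mono_on hm1 hIb hInt2 hkey
      rw [intervalIntegral.integral_const_mul, integral_inv h0notmem,
        Real.log_div one_ne_zero hm0.ne', Real.log_one, zero_sub] at h
      exact h
    have hlogm : -Real.log m ≤ L := by
      have hlogmeq : Real.log m = (1/(b:ℝ)) * Real.log (q/t) := Real.log_rpow (div_pos hq ht0) _
      rw [hlogmeq, Real.log_div hq.ne' ht0.ne']
      have hlt : Real.log t ≤ 0 := Real.log_nonpos ht0.le ht1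
      have hmono : Real.log q ≤ Real.log t := Real.log_le_log hq htq.le
      have hu0 : 0 ≤ Real.log t - Real.log q := by linarith
      have huL : Real.log t - Real.log q ≤ L := by rw [hLdef]; linarith
      have h1β : 1/(b:ℝ) ≤ 1 := by rw [div_le_one hβ0]; linarith
      have := mul_le_of_le_one_left hu0 h1β
      calc -((1/(b:ℝ)) * (Real.log q - Real.log t))
          = (1/(b:ℝ)) * (Real.log t - Real.log q) := by ring
        _ ≤ Real.log t - Real.log q := this
        _ ≤ L := huL
    have h2'' : ∫ x₂ in m..(1:ℝ), ψ x₂ ≤ (2*(m/q)) * L := by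
      have hmul : (2*(m/q)) * (-Real.log m) ≤ (2*(m/q))*L :=
        mul_le_mul_of_nonneg_left hlogm (by linarith)
      linarith
    have hstep : m/q ≤ (m/q)*L := le_mul_of_one_le_right hmq hL1
    have e3 : 0 ≤ m/q*L := mul_nonneg hmq (by linarith)
    linarith

lemma mid_lower (hb : 2 ≤ b) (hq : 0 < q) (hq16 : q ≤ 1/16) :
    1/(8*(b:ℝ)*((b:ℝ)-1)) * (q ^ (1/(b:ℝ)) / q) * (-Real.log q)
      ≤ ∫ x₂ in (0:ℝ)..1, ∫ x₃ in (0:ℝ)..1, 1/(|x₂|^b * |x₃|^b + q) := by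
  obtain ⟨h2, hβ0, hβ⟩ := beta_facts hb
  have hβ1 : (0:ℝ) < (b:ℝ)-1 := by linarith
  have hL16 : Real.log 16 ≤ -Real.log q := by
    have hlog : Real.log q ≤ Real.log (1/16) := Real.log_le_log hq hq16
    rw [one_div, Real.log_inv] at hlog; linarith
  have hlog4 : Real.log 16 = 2 * Real.log 4 := by
    rw [show (16:ℝ) = 4^2 by norm_num, Real.log_pow]; push_cast; ring
  have hlog4nn : 0 ≤ Real.log 4 := Real.log_nonneg (by norm_num)
  set L := -Real.log q with hLdef
  have hL0 : 0 ≤ L := by linarith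
  set ψ := fun x₂ : ℝ => ∫ x₃ in (0:ℝ)..1, 1/(|x₂|^b * |x₃|^b + q) with hψdef
  have hψcont : Continuous ψ :=
    cont_param hq (c := fun x₂ => |x₂|^b) (continuous_abs.pow b) (fun x => by positivity)
  have hψ0 : ∀ x₂ : ℝ, 0 ≤ ψ x₂ := fun x₂ =>
    intervalIntegral.integral_nonneg zero_le_one (fun x _ => integrand_nonneg hq (by positivity) x)
  set m := (4*q) ^ (1/(b:ℝ)) with hmdef
  have h4q : 0 < 4*q := by linarith
  have hm0 : 0 < m := Real.rpow_pos_of_pos h4q _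
  have hm1 : m ≤ 1 := Real.rpow_le_one h4q.le (by linarith) (by positivity)
  have hIa := hψcont.intervalIntegrable (μ := volume) 0 m
  have hIb := hψcont.intervalIntegrable (μ := volume) m 1
  rw [← intervalIntegral.integral_add_adjacent_intervals hIa hIb]
  have h1 : 0 ≤ ∫ x₂ in (0:ℝ)..m, ψ x₂ :=
    intervalIntegral.integral_nonneg hm0.le (fun x _ => hψ0 x)
  set K := q ^ (1/(b:ℝ)) / (4*((b:ℝ)-1)*q) with hKdef
  have hK0 : 0 ≤ K := by rw [hKdef]; positivity
  have hkey : ∀ x₂ ∈ Set.Icc m 1, K * x₂⁻¹ ≤ ψ x₂ := by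
    intro x₂ hx
    have hx0 : 0 < x₂ := lt_of_lt_of_le hm0 hx.1
    have hmb : m ^ b = 4*q := by
      rw [← Real.rpow_natCast m b, hmdef, ← Real.rpow_mul h4q.le,
        one_div_mul_cancel hβ, Real.rpow_one]
    have hs4 : 4*q ≤ |x₂|^b := by
      rw [abs_of_nonneg hx0.le]
      have hpow : m ^ b ≤ x₂ ^ b := pow_le_pow_left₀ hm0.le hx.1 b
      linarith [hmb ▸ hpow]
    have hinner := inner_lower hb hq (s := |x₂|^b) hs4
    have hid : (q/(|x₂|^b)) ^ (1/(b:ℝ)) = q ^ (1/(b:ℝ)) * x₂⁻¹ := by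
      rw [abs_of_nonneg hx0.le, Real.div_rpow hq.le (by positivity),
        ← Real.rpow_natCast x₂ b, ← Real.rpow_mul hx0.le,
        show (b:ℝ)*(1/(b:ℝ)) = 1 by field_simp, Real.rpow_one, div_eq_mul_inv]
    rw [hid] at hinner
    calc K * x₂⁻¹ = q ^ (1/(b:ℝ)) * x₂⁻¹ / (4*((b:ℝ)-1)*q) := by rw [hKdef]; ring
      _ ≤ ψ x₂ := hinner
  have hInt2 : IntervalIntegrable (fun x => K * x⁻¹) volume m 1 := by
    apply IntervalIntegrable.const_mul
    refine intervalIntegrable_inv (fun x hx => ?_) continuousOn_id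
    rw [Set.uIcc_of_le hm1] at hx
    exact (lt_of_lt_of_le hm0 hx.1).ne'
  have h0notmem : (0:ℝ) ∉ Set.uIcc m 1 := by
    rw [Set.uIcc_of_le hm1]
    intro hmem
    exact absurd hmem.1 (not_le.2 hm0)
  have h2' : K * (-Real.log m) ≤ ∫ x₂ in m..(1:ℝ), ψ x₂ := by
    have h := intervalIntegral.integral_mono_on hm1 hInt2 hIb hkey
    rwa [intervalIntegral.integral_const_mul, integral_inv h0notmem,
      Real.log_div one_ne_zero hm0.ne', Real.log_one, zero_sub] at h
  have hlogm : L/(2*(b:ℝ)) ≤ -Real.log m := by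
    have e : Real.log m = (1/(b:ℝ)) * Real.log (4*q) := by
      rw [hmdef]; exact Real.log_rpow h4q _
    rw [Real.log_mul (by norm_num) hq.ne'] at e
    have hlog4L : Real.log 4 ≤ L/2 := by rw [hLdef]; linarith
    have hstep : L/2 ≤ L - Real.log 4 := by linarith
    rw [e, show -((1/(b:ℝ))*(Real.log 4 + Real.log q)) = (1/(b:ℝ))*(L - Real.log 4) by
      rw [hLdef]; ring]
    calc L/(2*(b:ℝ)) = (1/(b:ℝ))*(L/2) := by ring
      _ ≤ (1/(b:ℝ))*(L - Real.log 4) := by gcongr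
  have hfin : K * (L/(2*(b:ℝ))) ≤ K * (-Real.log m) := mul_le_mul_of_nonneg_left hlogm hK0
  have heq : K * (L/(2*(b:ℝ))) = 1/(8*(b:ℝ)*((b:ℝ)-1)) * (q ^ (1/(b:ℝ)) / q) * L := by
    rw [hKdef, hLdef]
    field_simp
    ring
  linarith

lemma L_ge_one (hq : 0 < q) (hq16 : q ≤ 1/16) : 1 ≤ -Real.log q := by
  have hlog : Real.log q ≤ Real.log (1/16) := Real.log_le_log hq hq16
  have h16 : (1:ℝ) ≤ Real.log 16 := by
    rw [Real.le_log_iff_exp_le (by norm_num : (0:ℝ) < 16)]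
    have := Real.exp_one_lt_d9
    linarith
  rw [one_div, Real.log_inv] at hlog
  linarith

lemma outer_upper (hb : 2 ≤ b) {a : ℕ} (ha : 1 ≤ a) (hab : a < b) (hq : 0 < q)
    (hq16 : q ≤ 1/16) :
    ∫ x₁ in (0:ℝ)..1, ∫ x₂ in (0:ℝ)..1, ∫ x₃ in (0:ℝ)..1,
        1/(|x₁|^a * |x₂|^b * |x₃|^b + q)
      ≤ (3 / (1 - (a:ℝ)/(b:ℝ))) * (q ^ (1/(b:ℝ)) / q) * (-Real.log q) := by
  obtain ⟨h2, hβ0, hβ⟩ := beta_facts hb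
  have hab' : (a:ℝ) < (b:ℝ) := by exact_mod_cast hab
  have ha0 : (0:ℝ) < (a:ℝ) := by exact_mod_cast (by omega : 0 < a)
  have habd : (a:ℝ)/(b:ℝ) < 1 := (div_lt_one hβ0).2 hab'
  have hexp : (-1:ℝ) < -((a:ℝ)/(b:ℝ)) := by
    have : (0:ℝ) < (a:ℝ)/(b:ℝ) := by positivity
    linarith
  have hL1 : 1 ≤ -Real.log q := L_ge_one hq hq16
  set L := -Real.log q with hLdef
  have hL0 : (0:ℝ) ≤ L := by linarith
  set Φ := fun x₁ : ℝ => ∫ x₂ in (0:ℝ)..1, ∫ x₃ in (0:ℝ)..1,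
      1/(|x₁|^a * |x₂|^b * |x₃|^b + q) with hΦdef
  have hΦcont : Continuous Φ := cont_Phi hq a
  set M := fun x₁ : ℝ => (3 * (q ^ (1/(b:ℝ)) / q) * L) * x₁ ^ (-((a:ℝ)/(b:ℝ))) with hMdef
  have hpt : ∀ x₁ ∈ Set.Ioc (0:ℝ) 1, Φ x₁ ≤ M x₁ := by
    intro x₁ hx
    have hx0 : 0 < x₁ := hx.1
    have ht0 : 0 < |x₁|^a := by
      have : x₁ ≠ 0 := hx0.ne'
      positivity
    have ht1 : |x₁|^a ≤ 1 := by
      rw [abs_of_nonneg hx0.le]; exact pow_le_one₀ hx0.le hx.2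
    have h := mid_upper hb hq hq16 ht0 ht1
    have hid : (q/(|x₁|^a)) ^ (1/(b:ℝ)) = q ^ (1/(b:ℝ)) * x₁ ^ (-((a:ℝ)/(b:ℝ))) := by
      rw [abs_of_nonneg hx0.le, Real.div_rpow hq.le (by positivity),
        ← Real.rpow_natCast x₁ a, ← Real.rpow_mul hx0.le, mul_one_div,
        Real.rpow_neg hx0.le, div_eq_mul_inv]
    rw [hid] at h
    calc Φ x₁ ≤ 3 * (q ^ (1/(b:ℝ)) * x₁ ^ (-((a:ℝ)/(b:ℝ))) / q) * L := h
      _ = (3 * (q ^ (1/(b:ℝ)) / q) * L) * x₁ ^ (-((a:ℝ)/(b:ℝ))) := by ring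
  have hMint : IntervalIntegrable M volume 0 1 :=
    (intervalIntegrable_rpow' hexp).const_mul _
  have hΦint := hΦcont.intervalIntegrable (μ := volume) 0 1
  have hmono : ∫ x₁ in (0:ℝ)..1, Φ x₁ ≤ ∫ x₁ in (0:ℝ)..1, M x₁ := by
    rw [intervalIntegral.integral_of_le zero_le_one,
      intervalIntegral.integral_of_le zero_le_one]
    exact setIntegral_mono_on
      ((intervalIntegrable_iff_integrableOn_Ioc_of_le zero_le_one).1 hΦint)
      ((intervalIntegrable_iff_integrableOn_Ioc_of_le zero_le_one).1 hMint)
      measurableSet_Ioc hpt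
  have hne : -((a:ℝ)/(b:ℝ)) + 1 ≠ 0 := by
    have : (0:ℝ) < -((a:ℝ)/(b:ℝ)) + 1 := by linarith
    exact this.ne'
  have hMval : ∫ x₁ in (0:ℝ)..1, M x₁
      = (3 * (q ^ (1/(b:ℝ)) / q) * L) * (1/(-((a:ℝ)/(b:ℝ))+1)) := by
    rw [hMdef, intervalIntegral.integral_const_mul, integral_rpow (Or.inl hexp),
      Real.one_rpow, Real.zero_rpow hne]
    ring
  have hfinal : (3 * (q ^ (1/(b:ℝ)) / q) * L) * (1/(-((a:ℝ)/(b:ℝ))+1))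
      = (3 / (1 - (a:ℝ)/(b:ℝ))) * (q ^ (1/(b:ℝ)) / q) * L := by
    ring
  calc ∫ x₁ in (0:ℝ)..1, Φ x₁ ≤ ∫ x₁ in (0:ℝ)..1, M x₁ := hmono
    _ = _ := by rw [hMval, hfinal]

lemma outer_lower (hb : 2 ≤ b) (a : ℕ) (hq : 0 < q) :
    (∫ x₂ in (0:ℝ)..1, ∫ x₃ in (0:ℝ)..1, 1/(|x₂|^b * |x₃|^b + q))
      ≤ ∫ x₁ in (0:ℝ)..1, ∫ x₂ in (0:ℝ)..1, ∫ x₃ in (0:ℝ)..1,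
          1/(|x₁|^a * |x₂|^b * |x₃|^b + q) := by
  set Φ := fun x₁ : ℝ => ∫ x₂ in (0:ℝ)..1, ∫ x₃ in (0:ℝ)..1,
      1/(|x₁|^a * |x₂|^b * |x₃|^b + q) with hΦdef
  have hΦcont : Continuous Φ := cont_Phi hq a
  set J := ∫ x₂ in (0:ℝ)..1, ∫ x₃ in (0:ℝ)..1, 1/(|x₂|^b * |x₃|^b + q) with hJdef
  have hpt : ∀ x₁ ∈ Set.Icc (0:ℝ) 1, J ≤ Φ x₁ := by
    intro x₁ hx
    have h1 : |x₁|^a ≤ 1 := by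
      have : |x₁| ≤ 1 := abs_le.2 ⟨by linarith [hx.1], hx.2⟩
      exact pow_le_one₀ (abs_nonneg _) this
    have hinner : ∀ x₂ : ℝ, (∫ x₃ in (0:ℝ)..1, 1/(|x₂|^b * |x₃|^b + q))
        ≤ ∫ x₃ in (0:ℝ)..1, 1/(|x₁|^a * |x₂|^b * |x₃|^b + q) := by
      intro x₂
      apply intervalIntegral.integral_mono_on zero_le_one
        ((cont_integrand (s := |x₂|^b) hq (by positivity)).intervalIntegrable 0 1)
        ((cont_integrand (s := |x₁|^a * |x₂|^b) hq (by positivity)).intervalIntegrable 0 1)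
      intro x₃ _
      have hd : 0 < |x₁|^a * |x₂|^b * |x₃|^b + q := denom_pos hq (by positivity)
      apply one_div_le_one_div_of_le hd
      have hmul : |x₁|^a * (|x₂|^b * |x₃|^b) ≤ 1 * (|x₂|^b * |x₃|^b) :=
        mul_le_mul_of_nonneg_right h1 (by positivity)
      rw [one_mul] at hmul
      rw [mul_assoc]
      linarith
    apply intervalIntegral.integral_mono_on zero_le_one
      ((cont_param hq (c := fun x₂ => |x₂|^b) (continuous_abs.pow b)
        (fun x => by positivity)).intervalIntegrable 0 1)
      ((cont_param hq (c := fun x₂ => |x₁|^a * |x₂|^b)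
        (continuous_const.mul (continuous_abs.pow b))
        (fun x => by positivity)).intervalIntegrable 0 1)
    intro x₂ _
    exact hinner x₂
  have h := intervalIntegral.integral_mono_on zero_le_one
    (_root_.intervalIntegrable_const (c := J))
    (hΦcont.intervalIntegrable (μ := volume) 0 1) hpt
  simpa using h

lemma conv_abs (a : ℕ) :
    (∫ x₁ in (0:ℝ)..1, ∫ x₂ in (0:ℝ)..1, ∫ x₃ in (0:ℝ)..1,
        1/(x₁^a * x₂^b * x₃^b + q))
      = ∫ x₁ in (0:ℝ)..1, ∫ x₂ in (0:ℝ)..1, ∫ x₃ in (0:ℝ)..1,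
          1/(|x₁|^a * |x₂|^b * |x₃|^b + q) := by
  apply intervalIntegral.integral_congr
  intro x₁ hx₁
  rw [Set.uIcc_of_le (zero_le_one' ℝ)] at hx₁
  simp only []
  apply intervalIntegral.integral_congr
  intro x₂ hx₂
  rw [Set.uIcc_of_le (zero_le_one' ℝ)] at hx₂
  simp only []
  apply intervalIntegral.integral_congr
  intro x₃ hx₃
  rw [Set.uIcc_of_le (zero_le_one' ℝ)] at hx₃
  simp only []
  rw [abs_of_nonneg hx₁.1, abs_of_nonneg hx₂.1, abs_of_nonneg hx₃.1]

end ThetaAux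

open ThetaAux

/-- Theorem 4.4, Cases 3 and 7: for positive integers `i₃ > i₁ ≥ 1`,
`∫₀¹ ∫₀¹ ∫₀¹ 1/(x₁^{i₁}·x₂^{i₃}·x₃^{i₃} + q) dx₃ dx₂ dx₁ = Θ(q^(−1 + 1/i₃)·(−log q))`
as `q → 0⁺`. -/
theorem three_dim_monomial_scaling_two_max (i₁ i₃ : ℕ) (h1 : 1 ≤ i₁) (h3 : i₁ < i₃) :
    IsThetaAtZero
      (fun q : ℝ => ∫ x₁ in (0:ℝ)..1, ∫ x₂ in (0:ℝ)..1, ∫ x₃ in (0:ℝ)..1,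
        1 / (x₁ ^ i₁ * x₂ ^ i₃ * x₃ ^ i₃ + q))
      (fun q : ℝ => q ^ (-1 + 1/(i₃:ℝ)) * (-Real.log q)) := by
  have hb : 2 ≤ i₃ := by omega
  have h2 : (2:ℝ) ≤ (i₃:ℝ) := by exact_mod_cast hb
  have hβ0 : (0:ℝ) < (i₃:ℝ) := by linarith
  have hab' : (i₁:ℝ) < (i₃:ℝ) := by exact_mod_cast h3
  have ha0 : (0:ℝ) < (i₁:ℝ) := by exact_mod_cast (by omega : 0 < i₁)
  have habd : (i₁:ℝ)/(i₃:ℝ) < 1 := (div_lt_one hβ0).2 hab'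
  have habd0 : 0 < (i₁:ℝ)/(i₃:ℝ) := by positivity
  have hden : (0:ℝ) < 8*(i₃:ℝ)*((i₃:ℝ)-1) := by nlinarith
  refine ⟨1/(8*(i₃:ℝ)*((i₃:ℝ)-1)), 3/(1-(i₁:ℝ)/(i₃:ℝ)), 1/16,
    div_pos one_pos hden, ?_, by norm_num, ?_⟩
  · have hc1 : 1/(8*(i₃:ℝ)*((i₃:ℝ)-1)) ≤ 1 := by
      rw [div_le_one hden]; nlinarith
    have hd0 : 0 < 1-(i₁:ℝ)/(i₃:ℝ) := by linarith
    have hC3 : (3:ℝ) ≤ 3/(1-(i₁:ℝ)/(i₃:ℝ)) := by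
      rw [le_div_iff₀ hd0]; nlinarith
    linarith
  · intro q hq hq16'
    have hq16 : q ≤ 1/16 := le_of_lt hq16'
    have hqpow : q ^ (-1 + 1/(i₃:ℝ)) = q ^ (1/(i₃:ℝ)) / q := by
      rw [show (-1 + 1/(i₃:ℝ)) = 1/(i₃:ℝ) + (-1) by ring, Real.rpow_add hq,
        Real.rpow_neg_one]
      ring
    have hconv := conv_abs (b := i₃) (q := q) i₁
    constructor
    · have hlow := mid_lower (b := i₃) hb hq hq16
      have hout := outer_lower (b := i₃) hb i₁ hq
      have hchain : 1/(8*(i₃:ℝ)*((i₃:ℝ)-1)) * (q ^ (-1 + 1/(i₃:ℝ)) * (-Real.log q))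
          ≤ ∫ x₁ in (0:ℝ)..1, ∫ x₂ in (0:ℝ)..1, ∫ x₃ in (0:ℝ)..1,
              1 / (x₁ ^ i₁ * x₂ ^ i₃ * x₃ ^ i₃ + q) := by
        rw [hconv]
        calc 1/(8*(i₃:ℝ)*((i₃:ℝ)-1)) * (q ^ (-1 + 1/(i₃:ℝ)) * (-Real.log q))
            = 1/(8*(i₃:ℝ)*((i₃:ℝ)-1)) * (q ^ (1/(i₃:ℝ)) / q) * (-Real.log q) := by
              rw [hqpow]; ring
          _ ≤ ∫ x₂ in (0:ℝ)..1, ∫ x₃ in (0:ℝ)..1, 1/(|x₂|^i₃ * |x₃|^i₃ + q) := hlow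
          _ ≤ _ := hout
      exact hchain
    · have hup := outer_upper (b := i₃) hb h1 h3 hq hq16
      have hchain : (∫ x₁ in (0:ℝ)..1, ∫ x₂ in (0:ℝ)..1, ∫ x₃ in (0:ℝ)..1,
            1 / (x₁ ^ i₁ * x₂ ^ i₃ * x₃ ^ i₃ + q))
          ≤ 3/(1-(i₁:ℝ)/(i₃:ℝ)) * (q ^ (-1 + 1/(i₃:ℝ)) * (-Real.log q)) := by
        rw [hconv]
        calc (∫ x₁ in (0:ℝ)..1, ∫ x₂ in (0:ℝ)..1, ∫ x₃ in (0:ℝ)..1,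
              1/(|x₁|^i₁ * |x₂|^i₃ * |x₃|^i₃ + q))
            ≤ (3 / (1 - (i₁:ℝ)/(i₃:ℝ))) * (q ^ (1/(i₃:ℝ)) / q) * (-Real.log q) := hup
          _ = 3/(1-(i₁:ℝ)/(i₃:ℝ)) * (q ^ (-1 + 1/(i₃:ℝ)) * (-Real.log q)) := by
              rw [hqpow]; ring
      exact hchain
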